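/- Let A ∈ ℝ^{m×n}, q < m/2, U the orthogonal projection onto R = ⋂_{T ⊆ [m], |T| = m−2q} rowspan(A_T). Suppose y = Ax* + e with ‖e‖₀ ≤ q. Then every minimizer x̂ of the map x ↦ ‖y − Ax‖₀ over ℝ^n satisfies U x̂ = U x*. -/

import Mathlib

open Matrix Finset

noncomputable section

/-- ℓ₀ "norm": the number of nonzero coordinates. -/
def l0 {m : ℕ} (w : Fin m → ℝ) : ℕ := (Finset.univ.filter fun i => w i ≠ 0).card

/-- The row span of the submatrix `A_T` (rows of `A` indexed by `T`), viewed inside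
Euclidean space. -/
def rowspanE {m n : ℕ} (A : Matrix (Fin m) (Fin n) ℝ) (T : Finset (Fin m)) :
    Submodule ℝ (EuclideanSpace ℝ (Fin n)) :=
  Submodule.span ℝ {w : EuclideanSpace ℝ (Fin n) | ∃ i ∈ T, w = A i}

/-- The range (column space) of a square matrix, viewed inside Euclidean space. -/
def rangeE {n : ℕ} (M : Matrix (Fin n) (Fin n) ℝ) : Submodule ℝ (EuclideanSpace ℝ (Fin n)) where
  carrier := {x | ∃ v : EuclideanSpace ℝ (Fin n), M.mulVec v = x}
  zero_mem' := ⟨0, Matrix.mulVec_zero M⟩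
  add_mem' := by
    rintro a b ⟨va, ha⟩ ⟨vb, hb⟩
    exact ⟨va + vb, by simp [Matrix.mulVec_add, ha, hb]⟩
  smul_mem' := by
    rintro c a ⟨v, hv⟩
    exact ⟨c • v, by simp [Matrix.mulVec_smul, hv]⟩


theorem stmt10 {m n : ℕ} (A : Matrix (Fin m) (Fin n) ℝ) (q : ℕ) (hq : 2 * q < m)
    (U : Matrix (Fin n) (Fin n) ℝ) (hUsymm : U.IsSymm) (hUidem : U * U = U)
    (hUrange : rangeE U = ⨅ T ∈ {T : Finset (Fin m) | T.card = m - 2 * q}, rowspanE A T)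
    (xs : Fin n → ℝ) (e : Fin m → ℝ) (he : l0 e ≤ q) (y : Fin m → ℝ)
    (hy : y = A.mulVec xs + e) (xhat : Fin n → ℝ)
    (hmin : ∀ x : Fin n → ℝ, l0 (y - A.mulVec xhat) ≤ l0 (y - A.mulVec x)) :
    U.mulVec xhat = U.mulVec xs := by
  set d : Fin n → ℝ := xhat - xs with hd
  have hye : y - A.mulVec xs = e := by rw [hy]; abel
  have h1 : l0 (y - A.mulVec xhat) ≤ q := by
    have := hmin xs
    rw [hye] at this
    exact this.trans he
  have hv : ∀ i, A.mulVec d i = e i - (y - A.mulVec xhat) i := by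
    intro i
    simp only [hd, Matrix.mulVec_sub, Pi.sub_apply]
    rw [← hye]
    simp only [Pi.sub_apply]
    ring
  have hsub : (univ.filter fun i => A.mulVec d i ≠ 0) ⊆
      (univ.filter fun i => e i ≠ 0) ∪ (univ.filter fun i => (y - A.mulVec xhat) i ≠ 0) := by
    intro i hi
    simp only [mem_filter, mem_union, mem_univ, true_and] at *
    by_contra h
    push_neg at h
    exact hi (by rw [hv i, h.1, h.2, sub_zero])
  have hcard : (univ.filter fun i => A.mulVec d i ≠ 0).card ≤ 2 * q := by
    calc (univ.filter fun i => A.mulVec d i ≠ 0).card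
        ≤ ((univ.filter fun i => e i ≠ 0) ∪
            (univ.filter fun i => (y - A.mulVec xhat) i ≠ 0)).card :=
          Finset.card_le_card hsub
      _ ≤ (univ.filter fun i => e i ≠ 0).card +
            (univ.filter fun i => (y - A.mulVec xhat) i ≠ 0).card :=
          Finset.card_union_le _ _
      _ ≤ q + q := add_le_add he h1
      _ = 2 * q := by ring
  have htot : (univ.filter fun i => A.mulVec d i = 0).card +
      (univ.filter fun i => A.mulVec d i ≠ 0).card = m := by
    rw [Finset.card_filter_add_card_filter_not]
    simp
  have hzeroCard : m - 2 * q ≤ (univ.filter fun i => A.mulVec d i = 0).card := by omega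
  obtain ⟨T, hTsub, hTcard⟩ := Finset.exists_subset_card_eq hzeroCard
  have hT0 : ∀ i ∈ T, (A i) ⬝ᵥ d = 0 := by
    intro i hi
    have h := hTsub hi
    simp only [mem_filter, mem_univ, true_and] at h
    exact h
  have horth : ∀ w ∈ rowspanE A T, (w : Fin n → ℝ) ⬝ᵥ d = 0 := by
    intro w hw
    induction hw using Submodule.span_induction with
    | mem w hw => obtain ⟨i, hi, h⟩ := hw; rw [h]; exact hT0 i hi
    | zero => simp [zero_dotProduct]
    | add a b _ _ ha hb =>
        show (a + b : Fin n → ℝ) ⬝ᵥ d = 0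
        rw [add_dotProduct, ha, hb, add_zero]
    | smul c a _ ha =>
        show (c • a : Fin n → ℝ) ⬝ᵥ d = 0
        rw [smul_dotProduct, ha, smul_zero]
  have hmem : (WithLp.toLp 2 (U.mulVec d) : EuclideanSpace ℝ (Fin n)) ∈ rowspanE A T := by
    have hr : (WithLp.toLp 2 (U.mulVec d) : EuclideanSpace ℝ (Fin n)) ∈ rangeE U := ⟨WithLp.toLp 2 d, rfl⟩
    rw [hUrange] at hr
    simp only [Submodule.mem_iInf] at hr
    exact hr T hTcard
  have hz : U.mulVec d ⬝ᵥ d = 0 := horth _ hmem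
  have hvm : ∀ x : Fin n → ℝ, Matrix.vecMul x U = U.mulVec x := by
    intro x
    rw [← Matrix.mulVec_transpose, hUsymm]
  have hnorm : U.mulVec d ⬝ᵥ U.mulVec d = 0 := by
    calc U.mulVec d ⬝ᵥ U.mulVec d
        = Matrix.vecMul (U.mulVec d) U ⬝ᵥ d := Matrix.dotProduct_mulVec _ _ _
      _ = U.mulVec (U.mulVec d) ⬝ᵥ d := by rw [hvm]
      _ = U.mulVec d ⬝ᵥ d := by rw [Matrix.mulVec_mulVec, hUidem]
      _ = 0 := hz
  have hUd : U.mulVec d = 0 := (dotProduct_self_eq_zero).mp hnorm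
  have : U.mulVec xhat - U.mulVec xs = 0 := by
    rw [← Matrix.mulVec_sub]; exact hUd
  exact sub_eq_zero.mp this
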